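/- Let X⁽ᵛ⁾ be an n×p_v real matrix for v = 1, …, m, let X = [X⁽¹⁾, …, X⁽ᵐ⁾] be the n×p column-concatenated matrix with p = p₁ + ⋯ + p_m, and let X = U D Vᵀ be a singular value decomposition, where U is an n×n orthogonal matrix, V is a p×p orthogonal matrix, and D is an n×p matrix that is zero off the main diagonal with nonnegative diagonal entries σ₁ ≥ σ₂ ≥ ⋯ (singular values in decreasing order). For k ≤ min(n,p), let Uₖ be the n×k matrix of the first k columns of U, Dₖ the k×k diagonal matrix with diagonal σ₁, …, σₖ, and V_{1:k}⁽ᵛ⁾ the p_v×k block of V_{1:k} (the p×k matrix of the first k columns of V) consisting of the rows indexed p₁+⋯+p_{v−1}+1 through p₁+⋯+p_v. Let K⁽ᵛ⁾ = X⁽ᵛ⁾(X⁽ᵛ⁾)ᵀ, let Q be any k×k orthogonal matrix, and set H = UₖQ. Then tr(HᵀK⁽ᵛ⁾H) = tr(V_{1:k}⁽ᵛ⁾ Dₖᵀ Dₖ (V_{1:k}⁽ᵛ⁾)ᵀ). -/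
import Mathlib


open Matrix

/-- Equation (S3) in the proof of Proposition S2 of the paper: with
`K⁽ᵛ⁾ = X⁽ᵛ⁾ * (X⁽ᵛ⁾)ᵀ`, `H = Uₖ * Q` for an orthogonal `Q`, and a singular
value decomposition `X = U * D * Vᵀ` of the concatenated matrix, one has
`tr (Hᵀ * K⁽ᵛ⁾ * H) = tr (V_{1:k}⁽ᵛ⁾ * Dₖᵀ * Dₖ * (V_{1:k}⁽ᵛ⁾)ᵀ)`. -/
theorem trace_HKH_eq_trace_VDDV {n m k : ℕ} (p : Fin m → ℕ)
    (hk1 : k ≤ n) (hk2 : k ≤ ∑ v, p v)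
    (Xv : ∀ v : Fin m, Matrix (Fin n) (Fin (p v)) ℝ)
    (X : Matrix (Fin n) ((v : Fin m) × Fin (p v)) ℝ)
    (hX : ∀ i q, X i q = Xv q.1 i q.2)
    (U : Matrix (Fin n) (Fin n) ℝ)
    (V : Matrix ((v : Fin m) × Fin (p v)) (Fin (∑ v, p v)) ℝ)
    (D : Matrix (Fin n) (Fin (∑ v, p v)) ℝ)
    (σ : ℕ → ℝ)
    (hU : Uᵀ * U = 1) (hU' : U * Uᵀ = 1)
    (hV : Vᵀ * V = 1) (hV' : V * Vᵀ = 1)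
    (hD : ∀ i j, D i j = if (i : ℕ) = (j : ℕ) then σ (i : ℕ) else 0)
    (hσ : Antitone σ) (hσ0 : ∀ i, 0 ≤ σ i)
    (hsvd : X = U * D * Vᵀ)
    (Q : Matrix (Fin k) (Fin k) ℝ) (hQ : Qᵀ * Q = 1) (hQ' : Q * Qᵀ = 1)
    (H : Matrix (Fin n) (Fin k) ℝ)
    (hH : H = U.submatrix id (Fin.castLE hk1) * Q) :
    ∀ v : Fin m,
      (Hᵀ * (Xv v * (Xv v)ᵀ) * H).trace =
        ((V.submatrix (fun r : Fin (p v) => (⟨v, r⟩ : (w : Fin m) × Fin (p w)))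
            (Fin.castLE hk2)) *
          (Matrix.diagonal (fun i : Fin k => σ (i : ℕ)))ᵀ *
          Matrix.diagonal (fun i : Fin k => σ (i : ℕ)) *
          (V.submatrix (fun r : Fin (p v) => (⟨v, r⟩ : (w : Fin m) × Fin (p w)))
            (Fin.castLE hk2))ᵀ).trace := by

  intro v
  set W : Matrix (Fin (p v)) (Fin k) ℝ :=
    V.submatrix (fun r : Fin (p v) => (⟨v, r⟩ : (w : Fin m) × Fin (p w)))
      (Fin.castLE hk2) with hW
  set Dk : Matrix (Fin k) (Fin k) ℝ := Matrix.diagonal (fun i : Fin k => σ (i : ℕ)) with hDk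
  have hUX : Uᵀ * X = D * Vᵀ := by
    rw [hsvd, ← Matrix.mul_assoc, ← Matrix.mul_assoc, hU, Matrix.one_mul]
  have hA : (U.submatrix id (Fin.castLE hk1))ᵀ * Xv v = Dk * Wᵀ := by
    ext i j
    have h1 : ((U.submatrix id (Fin.castLE hk1))ᵀ * Xv v) i j
        = (Uᵀ * X) (Fin.castLE hk1 i) ⟨v, j⟩ := by
      simp only [Matrix.mul_apply, Matrix.transpose_apply, Matrix.submatrix_apply, id]
      exact Finset.sum_congr rfl fun l _ => by rw [hX]
    rw [h1, hUX]
    have h2 : (D * Vᵀ) (Fin.castLE hk1 i) ⟨v, j⟩ = σ (i : ℕ) * V ⟨v, j⟩ (Fin.castLE hk2 i) := by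
      rw [Matrix.mul_apply]
      rw [Finset.sum_eq_single (Fin.castLE hk2 i)]
      · rw [hD]; simp
      · intro b _ hb
        rw [hD]
        have : ((Fin.castLE hk1 i : Fin n) : ℕ) ≠ (b : ℕ) := by
          simp only [Fin.coe_castLE]
          intro h
          apply hb
          apply Fin.ext
          simp [← h]
        rw [if_neg this, zero_mul]
      · intro h; exact absurd (Finset.mem_univ _) h
    rw [h2]
    simp [hDk, hW, Matrix.mul_apply, Matrix.diagonal_apply, Finset.sum_ite_eq]
  have key : Hᵀ * (Xv v * (Xv v)ᵀ) * H
      = Qᵀ * ((Dk * Wᵀ) * (Dk * Wᵀ)ᵀ) * Q := by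
    rw [hH, Matrix.transpose_mul, ← hA]
    rw [Matrix.transpose_mul, Matrix.transpose_transpose]
    simp only [Matrix.mul_assoc]
  rw [key]
  rw [Matrix.trace_mul_cycle, ← Matrix.mul_assoc, hQ', Matrix.one_mul]
  rw [Matrix.trace_mul_comm]
  rw [Matrix.transpose_mul, Matrix.transpose_transpose]
  simp only [Matrix.mul_assoc]
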